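/- Let D be a finite digraph with root r having no in-edges, and let f₀ ⊇ f₁ ⊇ ⋯ be constructed as follows: f₀ = c, and for k < n, f_{k+1} agrees with f_k except on the in-edges of v_{k+1}, where it equals an r→v_{k+1} flow z_{k+1} ≤ f_k of maximum amount. Then λ_{f_k}(v) = λ_c(v) for every k ≤ n and every v ∈ V−r. -/

import Mathlib

attribute [local instance] Classical.propDecidable

/-- A finite digraph: edges `E` with tail and head maps (parallel edges allowed). -/
structure Digraph' (V E : Type) where
  tail : E → V
  head : E → V

namespace Digraph'

variable {V E : Type} [Fintype V] [Fintype E]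

/-- `es` is a directed walk from `r` to `v`. -/
def IsWalk (D : Digraph' V E) : V → V → List E → Prop
  | r, v, [] => r = v
  | r, v, e :: es => D.tail e = r ∧ D.IsWalk (D.head e) v es

/-- `es` is a directed path from `r` to `v` using only edges of `F`. -/
def IsPathIn (D : Digraph' V E) (F : Set E) (r v : V) (es : List E) : Prop :=
  D.IsWalk r v es ∧ (∀ e ∈ es, e ∈ F) ∧ (r :: es.map D.head).Nodup

/-- The members of a list of paths are pairwise edge-disjoint. -/
def EdgeDisjoint (P : List (List E)) : Prop :=
  P.Pairwise (fun p q => ∀ e, e ∈ p → e ∉ q)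

/-- The maximum number of pairwise edge-disjoint `r → v` paths inside `F`. -/
noncomputable def lam (D : Digraph' V E) (F : Set E) (r v : V) : ℕ :=
  sSup {k | ∃ P : List (List E), P.length = k ∧ (∀ p ∈ P, D.IsPathIn F r v p) ∧
    EdgeDisjoint P}

/-- The set of edges of `F` whose head is `v`. -/
def inEdges (D : Digraph' V E) (F : Set E) (v : V) : Set E := {e ∈ F | D.head e = v}

/-- The in-degree of `v` in the subgraph `F`. -/
noncomputable def indeg (D : Digraph' V E) (F : Set E) (v : V) : ℕ :=
  (D.inEdges F v).ncard

/-- `I` arises as the set of last edges of a system of pairwise edge-disjoint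
`r → v` paths in `F` (membership in the gammoid `G_F(v)`). -/
def InGammoid (D : Digraph' V E) (F : Set E) (r v : V) (I : Set E) : Prop :=
  ∃ P : List (List E), (∀ p ∈ P, D.IsPathIn F r v p) ∧ EdgeDisjoint P ∧
    I = {e | ∃ p ∈ P, p.getLast? = some e}

/-- `F` is an `r`-flame: the in-degree of each `v ≠ r` equals λ_F(r,v). -/
def IsFlame (D : Digraph' V E) (r : V) (F : Set E) : Prop :=
  ∀ v, v ≠ r → D.indeg F v = D.lam F r v

/-- Total of `x` on the in-edges of `v`. -/
noncomputable def inflow (D : Digraph' V E) (x : E → ℝ) (v : V) : ℝ :=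
  ∑ e, if D.head e = v then x e else 0

/-- Total of `x` on the out-edges of `v`. -/
noncomputable def outflow (D : Digraph' V E) (x : E → ℝ) (v : V) : ℝ :=
  ∑ e, if D.tail e = v then x e else 0

/-- Total of `x` on the edges entering the vertex set `W`. -/
noncomputable def rhoSet (D : Digraph' V E) (x : E → ℝ) (W : Set V) : ℝ :=
  ∑ e, if D.head e ∈ W ∧ D.tail e ∉ W then x e else 0

/-- `x` is a (nonnegative) `r → v` flow. -/
def IsFlow (D : Digraph' V E) (r v : V) (x : E → ℝ) : Prop :=
  (∀ e, 0 ≤ x e) ∧ (∀ u, u ≠ r → u ≠ v → D.inflow x u = D.outflow x u) ∧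
    D.inflow x r = 0 ∧ D.outflow x v = 0

/-- The flow-connectivity from `r` to `v` under capacity `c`. -/
noncomputable def lamF (D : Digraph' V E) (r v : V) (c : E → ℝ) : ℝ :=
  sSup {a | ∃ x, D.IsFlow r v x ∧ x ≤ c ∧ D.outflow x r = a}

/-- Characteristic vector of an edge. -/
noncomputable def chi (e : E) : E → ℝ := fun e' => if e' = e then 1 else 0

/-- Restriction of `x` to the in-edges of `v` (zero elsewhere). -/
noncomputable def restrictIn (D : Digraph' V E) (v : V) (x : E → ℝ) : E → ℝ :=
  fun e => if D.head e = v then x e else 0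

/-- The polygammoid `G_c(v)`: restrictions to the in-edges of `v`
of `r → v` flows bounded by `c`. -/
def polygammoid (D : Digraph' V E) (r v : V) (c : E → ℝ) : Set (E → ℝ) :=
  {s | ∃ x, D.IsFlow r v x ∧ x ≤ c ∧ D.restrictIn v x = s}

/-- `D` has no parallel edges. -/
def NoParallel (D : Digraph' V E) : Prop :=
  ∀ e e', D.tail e = D.tail e' → D.head e = D.head e' → e = e'

/-- `es` is a directed cycle. -/
def IsCycle (D : Digraph' V E) (es : List E) : Prop :=
  es ≠ [] ∧ ∃ u, D.IsWalk u u es ∧ (es.map D.head).Nodup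

/-- Characteristic vector of a list of edges. -/
noncomputable def charVec (es : List E) : E → ℝ :=
  fun e => ((es.filter (fun e' => e' = e)).length : ℝ)

end Digraph'

namespace Digraph'
section Helpers
open Digraph'
variable {V E : Type} [Fintype V] [Fintype E] (D : Digraph' V E)

lemma aux_sum_indicator (a : V) (W : Set V) (t : ℝ) :
    ∑ w : V, (if w ∈ W then (if a = w then t else 0) else 0) = if a ∈ W then t else 0 := by
  rw [Finset.sum_eq_single a]
  · by_cases h : a ∈ W <;> simp [h]
  · intro w _ hw
    simp [Ne.symm hw]
  · simp

lemma divergence_sum (x : E → ℝ) (W : Set V) :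
    ∑ w : V, (if w ∈ W then D.inflow x w - D.outflow x w else 0)
      = D.rhoSet x W - D.rhoSet x Wᶜ := by
  have h1 : ∀ w : V, (if w ∈ W then D.inflow x w - D.outflow x w else 0)
      = ∑ e, (if w ∈ W then ((if D.head e = w then x e else 0)
              - (if D.tail e = w then x e else 0)) else 0) := by
    intro w
    by_cases h : w ∈ W
    · simp [h, inflow, outflow, Finset.sum_sub_distrib]
    · simp [h]
  rw [Finset.sum_congr rfl (fun w _ => h1 w), Finset.sum_comm]
  unfold rhoSet
  rw [← Finset.sum_sub_distrib]
  refine Finset.sum_congr rfl fun e _ => ?_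
  have h2 : ∑ w : V, (if w ∈ W then ((if D.head e = w then x e else 0)
              - (if D.tail e = w then x e else 0)) else 0)
      = (if D.head e ∈ W then x e else 0) - (if D.tail e ∈ W then x e else 0) := by
    have : ∀ w : V, (if w ∈ W then ((if D.head e = w then x e else 0)
              - (if D.tail e = w then x e else 0)) else 0)
        = (if w ∈ W then (if D.head e = w then x e else 0) else 0)
          - (if w ∈ W then (if D.tail e = w then x e else 0) else 0) := by
      intro w; by_cases h : w ∈ W <;> simp [h]
    rw [Finset.sum_congr rfl (fun w _ => this w), Finset.sum_sub_distrib,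
      aux_sum_indicator, aux_sum_indicator]
  rw [h2]
  by_cases hh : D.head e ∈ W <;> by_cases ht : D.tail e ∈ W <;> simp [hh, ht]

lemma value_eq (r t : V) (x : E → ℝ) (hx : D.IsFlow r t x) (hrt : r ≠ t) :
    D.inflow x t = D.outflow x r := by
  have h := D.divergence_sum x Set.univ
  simp only [Set.mem_univ, if_true] at h
  have hz : D.rhoSet x Set.univ - D.rhoSet x Set.univᶜ = 0 := by
    unfold rhoSet; simp
  rw [hz] at h
  have h2 : ∑ w ∈ ({r, t} : Finset V), (D.inflow x w - D.outflow x w)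
      = ∑ w : V, (D.inflow x w - D.outflow x w) := by
    refine Finset.sum_subset (Finset.subset_univ _) fun w _ hw => ?_
    simp only [Finset.mem_insert, Finset.mem_singleton, not_or] at hw
    rw [hx.2.1 w hw.1 hw.2]; ring
  rw [h, Finset.sum_pair hrt] at h2
  have := hx.2.2.1
  have := hx.2.2.2
  linarith

lemma weak_duality (r t : V) (x cc : E → ℝ) (hx : D.IsFlow r t x) (hxc : x ≤ cc)
    (W : Set V) (htW : t ∈ W) (hrW : r ∉ W) :
    D.outflow x r ≤ D.rhoSet cc W := by
  have hrt : r ≠ t := fun h => hrW (h ▸ htW)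
  have hval := D.value_eq r t x hx hrt
  have hdiv := D.divergence_sum x W
  have hL : ∑ w : V, (if w ∈ W then D.inflow x w - D.outflow x w else 0)
      = D.inflow x t := by
    rw [Finset.sum_eq_single t]
    · simp [htW, hx.2.2.2]
    · intro w _ hw
      by_cases hwW : w ∈ W
      · have hwr : w ≠ r := fun h => hrW (h ▸ hwW)
        rw [if_pos hwW, hx.2.1 w hwr hw, sub_self]
      · simp [hwW]
    · simp
  have h1 : D.rhoSet x W ≤ D.rhoSet cc W := by
    unfold rhoSet
    refine Finset.sum_le_sum fun e _ => ?_
    by_cases h : D.head e ∈ W ∧ D.tail e ∉ W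
    · simpa [h] using hxc e
    · simp [h]
  have h2 : 0 ≤ D.rhoSet x Wᶜ := by
    unfold rhoSet
    refine Finset.sum_nonneg fun e _ => ?_
    split
    · exact hx.1 e
    · exact le_refl 0
  linarith

lemma flow_zero (r t : V) : D.IsFlow r t (fun _ => 0) := by
  refine ⟨fun e => le_refl 0, fun u _ _ => ?_, ?_, ?_⟩ <;> simp [inflow, outflow]

lemma zero_mem_S (r t : V) (cc : E → ℝ) (hcc : ∀ e, 0 ≤ cc e) :
    (0 : ℝ) ∈ {a | ∃ x, D.IsFlow r t x ∧ x ≤ cc ∧ D.outflow x r = a} := by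
  refine ⟨fun _ => 0, D.flow_zero r t, fun e => hcc e, ?_⟩
  simp [outflow]

lemma bddAbove_S (r t : V) (cc : E → ℝ) (hcc : ∀ e, 0 ≤ cc e) :
    BddAbove {a | ∃ x, D.IsFlow r t x ∧ x ≤ cc ∧ D.outflow x r = a} := by
  refine ⟨∑ e, cc e, ?_⟩
  rintro a ⟨x, hx, hxc, rfl⟩
  unfold outflow
  refine Finset.sum_le_sum fun e _ => ?_
  by_cases h : D.tail e = r
  · simpa [h] using hxc e
  · simp [h, hcc e]

lemma lamF_le_rho (r t : V) (cc : E → ℝ) (hcc : ∀ e, 0 ≤ cc e)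
    (W : Set V) (htW : t ∈ W) (hrW : r ∉ W) :
    D.lamF r t cc ≤ D.rhoSet cc W := by
  refine csSup_le ⟨0, D.zero_mem_S r t cc hcc⟩ ?_
  rintro a ⟨x, hx, hxc, rfl⟩
  exact D.weak_duality r t x cc hx hxc W htW hrW

lemma val_le_lamF (r t : V) (cc : E → ℝ) (hcc : ∀ e, 0 ≤ cc e)
    (x : E → ℝ) (hx : D.IsFlow r t x) (hxc : x ≤ cc) :
    D.outflow x r ≤ D.lamF r t cc :=
  le_csSup (D.bddAbove_S r t cc hcc) ⟨x, hx, hxc, rfl⟩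

end Helpers
section Compact
open Digraph'
variable {V E : Type} [Fintype V] [Fintype E] (D : Digraph' V E)

lemma continuous_inflow (w : V) : Continuous (fun x : E → ℝ => D.inflow x w) := by
  unfold inflow
  refine continuous_finset_sum _ fun e _ => ?_
  by_cases h : D.head e = w
  · simpa [h] using continuous_apply e
  · simp [h]
    exact continuous_const

lemma continuous_outflow (w : V) : Continuous (fun x : E → ℝ => D.outflow x w) := by
  unfold outflow
  refine continuous_finset_sum _ fun e _ => ?_
  by_cases h : D.tail e = w
  · simpa [h] using continuous_apply e
  · simp [h]
    exact continuous_const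

lemma exists_max_flow (r t : V) (cc : E → ℝ) (hcc : ∀ e, 0 ≤ cc e) :
    ∃ x, D.IsFlow r t x ∧ x ≤ cc ∧
      ∀ y, D.IsFlow r t y → y ≤ cc → D.outflow y r ≤ D.outflow x r := by
  set K : Set (E → ℝ) := {x | D.IsFlow r t x ∧ x ≤ cc} with hK
  have hKne : K.Nonempty := ⟨fun _ => 0, D.flow_zero r t, fun e => hcc e⟩
  have hclosed : IsClosed K := by
    have h1 : K = (⋂ e, {x : E → ℝ | 0 ≤ x e}) ∩
        (⋂ u : V, ⋂ _ : u ≠ r, ⋂ _ : u ≠ t, {x | D.inflow x u = D.outflow x u}) ∩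
        {x | D.inflow x r = 0} ∩ {x | D.outflow x t = 0} ∩
        (⋂ e, {x : E → ℝ | x e ≤ cc e}) := by
      ext x
      simp only [hK, Set.mem_setOf_eq, Set.mem_inter_iff, Set.mem_iInter, IsFlow]
      constructor
      · rintro ⟨⟨h1, h2, h3, h4⟩, h5⟩
        exact ⟨⟨⟨⟨h1, h2⟩, h3⟩, h4⟩, fun e => h5 e⟩
      · rintro ⟨⟨⟨⟨h1, h2⟩, h3⟩, h4⟩, h5⟩
        exact ⟨⟨h1, h2, h3, h4⟩, fun e => h5 e⟩
    rw [h1]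
    refine ((((isClosed_iInter fun e => isClosed_le continuous_const (continuous_apply e)).inter
      (isClosed_iInter fun u => isClosed_iInter fun _ => isClosed_iInter fun _ =>
        isClosed_eq (D.continuous_inflow u) (D.continuous_outflow u))).inter
      (isClosed_eq (D.continuous_inflow r) continuous_const)).inter
      (isClosed_eq (D.continuous_outflow t) continuous_const)).inter
      (isClosed_iInter fun e => isClosed_le (continuous_apply e) continuous_const)
  have hsub : K ⊆ Set.Icc 0 cc := by
    rintro x ⟨hx, hxc⟩
    exact ⟨fun e => hx.1 e, hxc⟩
  have hcpt : IsCompact K := (isCompact_Icc).of_isClosed_subset hclosed hsub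
  obtain ⟨x, hxK, hxmax⟩ := hcpt.exists_isMaxOn hKne ((D.continuous_outflow r).continuousOn)
  exact ⟨x, hxK.1, hxK.2, fun y hy hyc => hxmax ⟨hy, hyc⟩⟩

end Compact
section Residual
open Digraph'
variable {V E : Type} [Fintype V] [Fintype E] (D : Digraph' V E)

lemma divergence_sum_eq_inflow (r t : V) (x : E → ℝ) (hx : D.IsFlow r t x)
    (W : Set V) (htW : t ∈ W) (hrW : r ∉ W) :
    ∑ w : V, (if w ∈ W then D.inflow x w - D.outflow x w else 0) = D.inflow x t := by
  rw [Finset.sum_eq_single t]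
  · simp [htW, hx.2.2.2]
  · intro w _ hw
    by_cases hwW : w ∈ W
    · have hwr : w ≠ r := fun h => hrW (h ▸ hwW)
      rw [if_pos hwW, hx.2.1 w hwr hw, sub_self]
    · simp [hwW]
  · simp

lemma out_edges_zero (r t : V) (x : E → ℝ) (hx : D.IsFlow r t x)
    (a : E) (hat : D.tail a = t) : x a = 0 := by
  have h0 := hx.2.2.2
  have hle : (if D.tail a = t then x a else 0) ≤ D.outflow x t := by
    refine Finset.single_le_sum (f := fun e => if D.tail e = t then x e else 0)
      (fun e _ => ?_) (Finset.mem_univ a)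
    split
    · exact hx.1 e
    · exact le_refl 0
  rw [hat, if_pos rfl, h0] at hle
  exact le_antisymm hle (hx.1 a)

lemma residual_cut (r t : V) (ht : t ≠ r) (hr : ∀ e, D.head e ≠ r)
    (cc : E → ℝ) (x : E → ℝ) (hx : D.IsFlow r t x) (hxc : x ≤ cc)
    (hmax : ∀ y, D.IsFlow r t y → y ≤ cc → D.outflow y r ≤ D.outflow x r) :
    ∃ A : Set V, t ∈ A ∧ r ∉ A ∧
      (∀ e, D.tail e ∉ A → D.head e ∈ A → x e = cc e) ∧
      (∀ e, D.tail e ∈ A → D.head e ∉ A → x e = 0) ∧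
      D.rhoSet cc A = D.outflow x r := by
  classical
  set Rel : V → V → Prop := fun a b => ∃ e,
    (D.tail e = a ∧ D.head e = b ∧ x e < cc e) ∨
    (D.tail e = b ∧ D.head e = a ∧ 0 < x e) with hRel
  set A : Set V := {w | ¬ Relation.ReflTransGen Rel r w} with hA
  have hrA : r ∉ A := fun h => h Relation.ReflTransGen.refl
  have hsat : ∀ e, D.tail e ∉ A → D.head e ∈ A → x e = cc e := by
    intro e hta hha
    by_contra hne
    have hlt : x e < cc e := lt_of_le_of_ne (hxc e) hne
    simp only [hA, Set.mem_setOf_eq, not_not] at hta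
    exact hha (hta.tail ⟨e, Or.inl ⟨rfl, rfl, hlt⟩⟩)
  have hzero : ∀ e, D.tail e ∈ A → D.head e ∉ A → x e = 0 := by
    intro e hta hha
    by_contra hne
    have hpos : 0 < x e := lt_of_le_of_ne (hx.1 e) (Ne.symm hne)
    simp only [hA, Set.mem_setOf_eq, not_not] at hha
    exact hta (hha.tail ⟨e, Or.inr ⟨rfl, rfl, hpos⟩⟩)
  have htA : t ∈ A := by
    by_contra htA
    simp only [hA, Set.mem_setOf_eq, not_not] at htA
    have key : ∀ w, Relation.ReflTransGen Rel r w → ∃ m, ∃ p : ℕ → V, p 0 = r ∧ p m = w ∧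
        ∀ i, i < m → Rel (p i) (p (i + 1)) := by
      intro w hw
      induction hw with
      | refl => exact ⟨0, fun _ => r, rfl, rfl, fun i hi => absurd hi (Nat.not_lt_zero i)⟩
      | @tail b c hab hbc ih =>
        obtain ⟨m, p, hp0, hpm, hps⟩ := ih
        refine ⟨m + 1, fun i => if i = m + 1 then c else p i, by simp [hp0], by simp, ?_⟩
        intro i hi
        rcases Nat.lt_succ_iff_lt_or_eq.mp hi with hi' | hi'
        · have h1 : i ≠ m + 1 := by omega
          have h2 : i + 1 ≠ m + 1 := by omega
          simpa [h1, h2, show i ≠ m by omega] using hps i hi'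
        · subst hi'
          have h1 : i ≠ i + 1 := by omega
          simpa [h1, hpm] using hbc
    obtain ⟨m, p, hp0, hpm, hps⟩ := key t htA
    have hex : ∃ j, p j = t := ⟨m, hpm⟩
    set j := Nat.find hex with hjdef
    have hjt : p j = t := Nat.find_spec hex
    have hlt' : ∀ i, i < j → p i ≠ t := fun i hi => Nat.find_min hex hi
    have hjm : j ≤ m := Nat.find_min' hex hpm
    have hj0 : 0 < j := by
      rcases Nat.eq_zero_or_pos j with h | h
      · rw [h] at hjt; rw [hp0] at hjt; exact absurd hjt.symm ht
      · exact h
    have hstep' : ∀ i : Fin j, Rel (p i) (p (i + 1)) :=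
      fun i => hps i (lt_of_lt_of_le i.isLt hjm)
    have hgood : ∀ i : Fin j, ∃ qq : E × Bool,
        (qq.2 = true → D.tail qq.1 = p i ∧ D.head qq.1 = p (i + 1) ∧ x qq.1 < cc qq.1) ∧
        (qq.2 = false → D.tail qq.1 = p (i + 1) ∧ D.head qq.1 = p i ∧ 0 < x qq.1) := by
      intro i
      obtain ⟨e, he⟩ := hstep' i
      rcases he with h | h
      · exact ⟨(e, true), fun _ => h, fun hF => by simp at hF⟩
      · exact ⟨(e, false), fun hT => by simp at hT, fun _ => h⟩
    choose q hq1 hq2 using hgood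
    set σ : Fin j → ℝ := fun i => if (q i).2 = true then 1 else -1 with hσ
    set d : E → ℝ := fun a => ∑ i : Fin j, σ i * (if (q i).1 = a then 1 else 0) with hd
    set gap : Fin j → ℝ := fun i =>
      if (q i).2 = true then cc (q i).1 - x (q i).1 else x (q i).1 with hgapdef
    have hgap : ∀ i, 0 < gap i := by
      intro i
      by_cases hb : (q i).2 = true
      · have := (hq1 i hb).2.2
        simp only [hgapdef, hb, if_true]
        linarith
      · have hb' : (q i).2 = false := Bool.eq_false_iff.mpr hb
        have := (hq2 i hb').2.2
        simp only [hgapdef, hb', Bool.false_eq_true, if_false]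
        linarith
    haveI : Nonempty (Fin j) := ⟨⟨0, hj0⟩⟩
    set εj : ℝ := Finset.univ.inf' Finset.univ_nonempty gap with hεjdef
    have hεjpos : 0 < εj := by
      rw [hεjdef, Finset.lt_inf'_iff]
      exact fun i _ => hgap i
    set ε : ℝ := εj / j with hεdef
    have hjR : (0:ℝ) < j := by exact_mod_cast hj0
    have hεpos : 0 < ε := div_pos hεjpos hjR
    have hεmul : ε * j = εj := div_mul_cancel₀ εj (ne_of_gt hjR)
    have hεj_le : ∀ i, εj ≤ gap i := fun i => Finset.inf'_le gap (Finset.mem_univ i)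
    set y : E → ℝ := fun a => x a + ε * d a with hy
    have hdle : ∀ a, d a ≤ j := by
      intro a
      rw [hd]
      calc ∑ i : Fin j, σ i * (if (q i).1 = a then 1 else 0)
          ≤ ∑ _i : Fin j, (1:ℝ) := by
            refine Finset.sum_le_sum fun i _ => ?_
            by_cases h1 : (q i).2 = true <;> by_cases h2 : (q i).1 = a <;>
              simp [hσ, h1, h2]
        _ = j := by simp
    have hdge : ∀ a, -(j:ℝ) ≤ d a := by
      intro a
      rw [hd]
      calc -(j:ℝ) = ∑ _i : Fin j, (-1:ℝ) := by simp
        _ ≤ ∑ i : Fin j, σ i * (if (q i).1 = a then 1 else 0) := by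
            refine Finset.sum_le_sum fun i _ => ?_
            by_cases h1 : (q i).2 = true <;> by_cases h2 : (q i).1 = a <;>
              simp [hσ, h1, h2]
    have hpos_d : ∀ a, 0 < d a → ∃ i, (q i).1 = a ∧ (q i).2 = true := by
      intro a hda
      by_contra hcon
      push_neg at hcon
      have : d a ≤ 0 := by
        rw [hd]
        refine Finset.sum_nonpos fun i _ => ?_
        by_cases h2 : (q i).1 = a
        · have hb : (q i).2 = false := Bool.eq_false_iff.mpr (hcon i h2)
          simp [hσ, hb, h2]
        · simp [h2]
      linarith
    have hneg_d : ∀ a, d a < 0 → ∃ i, (q i).1 = a ∧ (q i).2 = false := by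
      intro a hda
      by_contra hcon
      push_neg at hcon
      have : 0 ≤ d a := by
        rw [hd]
        refine Finset.sum_nonneg fun i _ => ?_
        by_cases h2 : (q i).1 = a
        · have hb : (q i).2 = true := by
            rcases Bool.eq_false_or_eq_true (q i).2 with hh | hh
            · exact hh
            · exact absurd hh (hcon i h2)
          simp [hσ, hb, h2]
        · simp [h2]
      linarith
    have hy_le : ∀ a, y a ≤ cc a := by
      intro a
      by_cases hda : d a ≤ 0
      · have : ε * d a ≤ 0 := mul_nonpos_of_nonneg_of_nonpos hεpos.le hda
        have := hxc a
        simp only [hy]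
        linarith
      · push_neg at hda
        obtain ⟨i, hqa, hb⟩ := hpos_d a hda
        have h1 : ε * d a ≤ ε * j := mul_le_mul_of_nonneg_left (hdle a) hεpos.le
        have h4 : gap i = cc a - x a := by simp [hgapdef, hb, hqa]
        have h3 := hεj_le i
        simp only [hy]
        rw [h4] at h3
        linarith [hεmul]
    have hy_nonneg : ∀ a, 0 ≤ y a := by
      intro a
      by_cases hda : 0 ≤ d a
      · have : 0 ≤ ε * d a := mul_nonneg hεpos.le hda
        have := hx.1 a
        simp only [hy]
        linarith
      · push_neg at hda
        obtain ⟨i, hqa, hb⟩ := hneg_d a hda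
        have h1 : ε * (-(j:ℝ)) ≤ ε * d a := mul_le_mul_of_nonneg_left (hdge a) hεpos.le
        have h4 : gap i = x a := by simp [hgapdef, hb, hqa]
        have h3 := hεj_le i
        rw [h4] at h3
        simp only [hy]
        nlinarith [hεmul]
    have hsum_d : ∀ P : E → Prop,
        ∑ a, (if P a then d a else 0)
          = ∑ i : Fin j, σ i * (if P ((q i).1) then 1 else 0) := by
      intro P
      have h1 : ∀ a, (if P a then d a else 0)
          = ∑ i : Fin j, (if P a then σ i * (if (q i).1 = a then 1 else 0) else 0) := by
        intro a
        by_cases h : P a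
        · simp only [if_pos h, hd]
        · simp [h]
      rw [Finset.sum_congr rfl (fun a _ => h1 a), Finset.sum_comm]
      refine Finset.sum_congr rfl fun i _ => ?_
      rw [Finset.sum_eq_single (q i).1]
      · by_cases h : P ((q i).1) <;> simp [h]
      · intro a _ ha
        have : (q i).1 ≠ a := Ne.symm ha
        by_cases h : P a <;> simp [h, this]
      · simp
    have hinf : ∀ w, D.inflow y w = D.inflow x w
        + ε * ∑ i : Fin j, σ i * (if D.head ((q i).1) = w then 1 else 0) := by
      intro w
      unfold inflow
      have h1 : ∀ a, (if D.head a = w then y a else 0)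
          = (if D.head a = w then x a else 0) + ε * (if D.head a = w then d a else 0) := by
        intro a
        by_cases h : D.head a = w <;> simp [h, hy]
      rw [Finset.sum_congr rfl (fun a _ => h1 a), Finset.sum_add_distrib,
        ← Finset.mul_sum, hsum_d (fun a => D.head a = w)]
    have houtf : ∀ w, D.outflow y w = D.outflow x w
        + ε * ∑ i : Fin j, σ i * (if D.tail ((q i).1) = w then 1 else 0) := by
      intro w
      unfold outflow
      have h1 : ∀ a, (if D.tail a = w then y a else 0)
          = (if D.tail a = w then x a else 0) + ε * (if D.tail a = w then d a else 0) := by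
        intro a
        by_cases h : D.tail a = w <;> simp [h, hy]
      rw [Finset.sum_congr rfl (fun a _ => h1 a), Finset.sum_add_distrib,
        ← Finset.mul_sum, hsum_d (fun a => D.tail a = w)]
    have hdiv_d : ∀ w, (∑ i : Fin j, σ i * (if D.head ((q i).1) = w then 1 else 0))
        - (∑ i : Fin j, σ i * (if D.tail ((q i).1) = w then 1 else 0))
        = (if p j = w then 1 else 0) - (if p 0 = w then 1 else 0) := by
      intro w
      rw [← Finset.sum_sub_distrib]
      have hterm : ∀ i : Fin j, σ i * (if D.head ((q i).1) = w then 1 else 0)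
          - σ i * (if D.tail ((q i).1) = w then 1 else 0)
          = (if p (↑i + 1) = w then (1:ℝ) else 0) - (if p ↑i = w then 1 else 0) := by
        intro i
        by_cases hb : (q i).2 = true
        · obtain ⟨h1, h2, _⟩ := hq1 i hb
          rw [h1, h2]
          simp [hσ, hb]
        · have hb' : (q i).2 = false := Bool.eq_false_iff.mpr hb
          obtain ⟨h1, h2, _⟩ := hq2 i hb'
          rw [h1, h2]
          simp only [hσ, hb', Bool.false_eq_true, if_false]
          ring
      rw [Finset.sum_congr rfl (fun i _ => hterm i)]
      rw [Fin.sum_univ_eq_sum_range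
        (fun i => (if p (i + 1) = w then (1:ℝ) else 0) - (if p i = w then 1 else 0)) j]
      exact Finset.sum_range_sub (fun i => if p i = w then (1:ℝ) else 0) j
    have hyflow : D.IsFlow r t y := by
      refine ⟨hy_nonneg, ?_, ?_, ?_⟩
      · intro u hur hut
        rw [hinf u, houtf u]
        have hdd := hdiv_d u
        have hjw : (if p j = u then (1:ℝ) else 0) = 0 := by
          rw [hjt]; simp [Ne.symm hut]
        have h0w : (if p 0 = u then (1:ℝ) else 0) = 0 := by
          rw [hp0]; simp [Ne.symm hur]
        rw [hjw, h0w, sub_zero] at hdd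
        rw [hx.2.1 u hur hut]
        have : (∑ i : Fin j, σ i * (if D.head ((q i).1) = u then 1 else 0))
            = (∑ i : Fin j, σ i * (if D.tail ((q i).1) = u then 1 else 0)) := by linarith
        rw [this]
      · unfold inflow
        exact Finset.sum_eq_zero fun a _ => by simp [hr a]
      · rw [houtf t, hx.2.2.2]
        have h0 : (∑ i : Fin j, σ i * (if D.tail ((q i).1) = t then 1 else 0)) = 0 := by
          refine Finset.sum_eq_zero fun i _ => ?_
          by_cases hb : (q i).2 = true
          · obtain ⟨h1, _, _⟩ := hq1 i hb
            have : D.tail ((q i).1) ≠ t := by rw [h1]; exact hlt' i i.isLt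
            simp [this]
          · have hb' : (q i).2 = false := Bool.eq_false_iff.mpr hb
            obtain ⟨h1, _, h3⟩ := hq2 i hb'
            have : D.tail ((q i).1) ≠ t := by
              intro hcon
              have := D.out_edges_zero r t x hx ((q i).1) hcon
              linarith
            simp [this]
        rw [h0]
        ring
    have hval : D.outflow y r = D.outflow x r + ε := by
      rw [houtf r]
      have hA0 : (∑ i : Fin j, σ i * (if D.head ((q i).1) = r then 1 else 0)) = 0 :=
        Finset.sum_eq_zero fun i _ => by simp [hr ((q i).1)]
      have hdd := hdiv_d r
      rw [hA0] at hdd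
      have hjw : (if p j = r then (1:ℝ) else 0) = 0 := by rw [hjt]; simp [ht]
      have h0w : (if p 0 = r then (1:ℝ) else 0) = 1 := by rw [hp0]; simp
      rw [hjw, h0w] at hdd
      have : (∑ i : Fin j, σ i * (if D.tail ((q i).1) = r then 1 else 0)) = 1 := by
        linarith
      rw [this]
      ring
    have := hmax y hyflow (fun a => hy_le a)
    rw [hval] at this
    linarith
  refine ⟨A, htA, hrA, hsat, hzero, ?_⟩
  have hrtne : r ≠ t := Ne.symm ht
  have hvalx := D.value_eq r t x hx hrtne
  have hdiv := D.divergence_sum x A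
  have hL := D.divergence_sum_eq_inflow r t x hx A htA hrA
  have h1 : D.rhoSet x A = D.rhoSet cc A := by
    unfold rhoSet
    refine Finset.sum_congr rfl fun e _ => ?_
    by_cases h : D.head e ∈ A ∧ D.tail e ∉ A
    · rw [if_pos h, if_pos h, hsat e h.2 h.1]
    · rw [if_neg h, if_neg h]
  have h2 : D.rhoSet x Aᶜ = 0 := by
    unfold rhoSet
    refine Finset.sum_eq_zero fun e _ => ?_
    by_cases h : D.head e ∈ Aᶜ ∧ D.tail e ∉ Aᶜ
    · rw [if_pos h]
      exact hzero e (by simpa using h.2) (by simpa using h.1)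
    · rw [if_neg h]
  rw [h1, h2] at hdiv
  rw [hL] at hdiv
  linarith

end Residual
section Step
open Digraph'
variable {V E : Type} [Fintype V] [Fintype E] (D : Digraph' V E)

lemma step_preserves (r : V) (hr : ∀ e, D.head e ≠ r) (v : V) (hv : v ≠ r)
    (g : E → ℝ) (hg : ∀ e, 0 ≤ g e) (z : E → ℝ)
    (hz : D.IsFlow r v z) (hzg : z ≤ g)
    (hzmax : D.outflow z r = D.lamF r v g)
    (u : V) (hu : u ≠ r) :
    D.lamF r u (fun e => if D.head e = v then z e else g e) = D.lamF r u g := by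
  set g' : E → ℝ := fun e => if D.head e = v then z e else g e with hg'
  have hg'le : ∀ e, g' e ≤ g e := by
    intro e; simp only [hg']; split; exacts [hzg e, le_refl _]
  have hg'nonneg : ∀ e, 0 ≤ g' e := by
    intro e; simp only [hg']; split; exacts [hz.1 e, hg e]
  have hzg' : z ≤ g' := by
    intro e; simp only [hg']; split; exacts [le_refl _, hzg e]
  have hle : D.lamF r u g' ≤ D.lamF r u g := by
    unfold lamF
    refine csSup_le_csSup (D.bddAbove_S r u g hg) ⟨0, D.zero_mem_S r u g' hg'nonneg⟩ ?_
    rintro a ⟨x, hx, hxc, rfl⟩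
    exact ⟨x, hx, fun e => le_trans (hxc e) (hg'le e), rfl⟩
  have hzmax' : ∀ y, D.IsFlow r v y → y ≤ g → D.outflow y r ≤ D.outflow z r := by
    intro y hy hyg
    rw [hzmax]
    exact D.val_le_lamF r v g hg y hy hyg
  obtain ⟨A, hvA, hrA, hsatA, _hzeroA, hrhoA⟩ :=
    D.residual_cut r v hv hr g z hz hzg hzmax'
  obtain ⟨x, hx, hxc, hxmax⟩ := D.exists_max_flow r u g' hg'nonneg
  obtain ⟨A', huA', hrA', _hsatA', _hzeroA', hrhoA'⟩ :=
    D.residual_cut r u hu hr g' x hx hxc hxmax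
  have hlam' : D.lamF r u g' = D.outflow x r := by
    refine le_antisymm ?_ (D.val_le_lamF r u g' hg'nonneg x hx hxc)
    refine csSup_le ⟨0, D.zero_mem_S r u g' hg'nonneg⟩ ?_
    rintro a ⟨y, hy, hyc, rfl⟩
    exact hxmax y hy hyc
  have hge : D.lamF r u g ≤ D.outflow x r := by
    by_cases hvA' : v ∈ A'
    · have e1 : D.rhoSet g' A = D.outflow z r := by
        rw [← hrhoA]
        unfold rhoSet
        refine Finset.sum_congr rfl fun e _ => ?_
        by_cases h : D.head e ∈ A ∧ D.tail e ∉ A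
        · rw [if_pos h, if_pos h]
          simp only [hg']
          split
          · exact hsatA e h.2 h.1
          · rfl
        · rw [if_neg h, if_neg h]
      have e2 : D.outflow z r ≤ D.rhoSet g' (A ∩ A') :=
        D.weak_duality r v z g' hz hzg' (A ∩ A') ⟨hvA, hvA'⟩ (fun h => hrA h.1)
      have e3 : D.lamF r u g ≤ D.rhoSet g (A ∪ A') :=
        D.lamF_le_rho r u g hg (A ∪ A') (Or.inr huA') (fun h => h.elim hrA hrA')
      have e4 : D.rhoSet g' (A ∪ A') = D.rhoSet g (A ∪ A') := by
        unfold rhoSet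
        refine Finset.sum_congr rfl fun e _ => ?_
        by_cases h : D.head e ∈ A ∪ A' ∧ D.tail e ∉ A ∪ A'
        · rw [if_pos h, if_pos h]
          simp only [hg']
          split
          · next hhv =>
              exact hsatA e (fun hc => h.2 (Or.inl hc)) (by rw [hhv]; exact hvA)
          · rfl
        · rw [if_neg h, if_neg h]
      have e5 : D.rhoSet g' (A ∪ A') + D.rhoSet g' (A ∩ A')
          ≤ D.rhoSet g' A' + D.rhoSet g' A := by
        unfold rhoSet
        rw [← Finset.sum_add_distrib, ← Finset.sum_add_distrib]
        refine Finset.sum_le_sum fun e _ => ?_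
        have hge' := hg'nonneg e
        by_cases h1 : D.head e ∈ A <;> by_cases h2 : D.head e ∈ A' <;>
          by_cases h3 : D.tail e ∈ A <;> by_cases h4 : D.tail e ∈ A' <;>
          simp [Set.mem_union, Set.mem_inter_iff, h1, h2, h3, h4] <;> linarith
      linarith [hrhoA']
    · have e0 : D.rhoSet g' A' = D.rhoSet g A' := by
        unfold rhoSet
        refine Finset.sum_congr rfl fun e _ => ?_
        by_cases h : D.head e ∈ A' ∧ D.tail e ∉ A'
        · rw [if_pos h, if_pos h]
          simp only [hg']
          split
          · next hhv => exact absurd (hhv ▸ h.1) hvA'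
          · rfl
        · rw [if_neg h, if_neg h]
      have := D.lamF_le_rho r u g hg A' huA' hrA'
      linarith [hrhoA']
  linarith [hlam', hle, hge, D.val_le_lamF r u g' hg'nonneg x hx hxc]

end Step
end Digraph'

open Digraph' in
/-- The successive capacity vectors produced by the algorithm all preserve
every flow-connectivity from `r`. -/
theorem stmt9 {V E : Type} [Fintype V] [Fintype E] (D : Digraph' V E)
    (hsimple : D.NoParallel) (n : ℕ) (venum : Fin (n + 1) → V)
    (hbij : Function.Bijective venum) (r : V) (hv0 : venum 0 = r)
    (hr : ∀ e, D.head e ≠ r) (c : E → ℝ) (hc : ∀ e, 0 ≤ c e)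
    (f : Fin (n + 1) → E → ℝ) (z : Fin n → E → ℝ) (hf0 : f 0 = c)
    (hstep : ∀ k : Fin n,
      D.IsFlow r (venum k.succ) (z k) ∧ z k ≤ f k.castSucc ∧
      D.outflow (z k) r = D.lamF r (venum k.succ) (f k.castSucc) ∧
      f k.succ = fun e => if D.head e = venum k.succ then z k e else f k.castSucc e) :
    ∀ k : Fin (n + 1), ∀ u, u ≠ r → D.lamF r u (f k) = D.lamF r u c := by
  have hfnonneg : ∀ k : Fin (n + 1), ∀ e, 0 ≤ f k e := by
    intro k
    induction k using Fin.induction with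
    | zero => rw [hf0]; exact hc
    | succ i ih =>
      intro e
      rw [(hstep i).2.2.2]
      dsimp only
      split
      · exact (hstep i).1.1 e
      · exact ih e
  intro k
  induction k using Fin.induction with
  | zero => intro u hu; rw [hf0]
  | succ i ih =>
    intro u hu
    have hvne : venum i.succ ≠ r := by
      rw [← hv0]
      intro h
      exact (Fin.succ_ne_zero i) (hbij.1 h)
    have hs := hstep i
    rw [hs.2.2.2]
    rw [D.step_preserves r hr (venum i.succ) hvne (f i.castSucc) (hfnonneg i.castSucc)
      (z i) hs.1 hs.2.1 hs.2.2.1 u hu]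
    exact ih u hu
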